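/- The function D(U₁, U₂) = √(1 − |Tr(U₁U₂†)|²/d²) on d×d unitaries satisfies the triangle inequality: D(U₁, U₃) ≤ D(U₁, U₂) + D(U₂, U₃). -/

import Mathlib

open Matrix
open scoped InnerProductSpace ComplexConjugate

/-- Real arithmetic core of the triangle inequality. -/
lemma pdist_aux_real (a b c : ℝ) (ha0 : 0 ≤ a) (ha1 : a ≤ 1) (hb0 : 0 ≤ b) (hb1 : b ≤ 1)
    (hc0 : 0 ≤ c)
    (h : a * b - Real.sqrt (1 - a^2) * Real.sqrt (1 - b^2) ≤ c) :
    Real.sqrt (1 - c^2) ≤ Real.sqrt (1 - a^2) + Real.sqrt (1 - b^2) := by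
  set sa := Real.sqrt (1 - a^2) with hsa
  set sb := Real.sqrt (1 - b^2) with hsb
  have hsa0 : 0 ≤ sa := Real.sqrt_nonneg _
  have hsb0 : 0 ≤ sb := Real.sqrt_nonneg _
  have hsa2 : sa ^ 2 = 1 - a^2 := Real.sq_sqrt (by nlinarith)
  have hsb2 : sb ^ 2 = 1 - b^2 := Real.sq_sqrt (by nlinarith)
  have key : 1 - c^2 ≤ (sa + sb)^2 := by
    rcases le_or_gt (a*b) (sa*sb) with hle | hlt
    · nlinarith [sq_nonneg (a*b - sa*sb), sq_nonneg c]
    · have h1 : 0 ≤ a*b - sa*sb := by linarith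
      have h2 : (a*b - sa*sb)^2 ≤ c^2 := by nlinarith
      have hab1 : a * b ≤ 1 := by nlinarith
      nlinarith [mul_nonneg (mul_nonneg hsa0 hsb0) (by nlinarith [mul_nonneg hsa0 hsb0] : (0:ℝ) ≤ 1 - a*b + sa*sb)]
  calc Real.sqrt (1 - c^2) ≤ Real.sqrt ((sa+sb)^2) := Real.sqrt_le_sqrt key
    _ = sa + sb := Real.sqrt_sq (by linarith)

/-- Inner-product core: for unit vectors u, v, w in a complex inner product space. -/
lemma pdist_aux_inner {E : Type*} [NormedAddCommGroup E] [InnerProductSpace ℂ E]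
    (u v w : E) (hu : ‖u‖ = 1) (hv : ‖v‖ = 1) (hw : ‖w‖ = 1) :
    ‖(⟪v, u⟫_ℂ)‖ * ‖(⟪v, w⟫_ℂ)‖ - Real.sqrt (1 - ‖(⟪v, u⟫_ℂ)‖^2) * Real.sqrt (1 - ‖(⟪v, w⟫_ℂ)‖^2)
      ≤ ‖(⟪u, w⟫_ℂ)‖ := by
  set a := (⟪v, u⟫_ℂ) with ha
  set b := (⟪v, w⟫_ℂ) with hb
  set u' := u - a • v with hu'
  set w' := w - b • v with hw'
  have hvv : (⟪v, v⟫_ℂ) = 1 := by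
    rw [inner_self_eq_norm_sq_to_K, hv]; norm_num
  have huu : (⟪u, u⟫_ℂ) = 1 := by
    rw [inner_self_eq_norm_sq_to_K, hu]; norm_num
  have hww : (⟪w, w⟫_ℂ) = 1 := by
    rw [inner_self_eq_norm_sq_to_K, hw]; norm_num
  have huv : (⟪u, v⟫_ℂ) = conj a := by rw [ha, inner_conj_symm]
  have hwv : (⟪w, v⟫_ℂ) = conj b := by rw [hb, inner_conj_symm]
  have hdecomp : (⟪u', w'⟫_ℂ) = ⟪u, w⟫_ℂ - conj a * b := by
    simp only [hu', hw', inner_sub_left, inner_sub_right, inner_smul_left, inner_smul_right,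
      hvv, huv, ha.symm, hb.symm]
    ring
  have hnu' : ‖u'‖^2 = 1 - ‖a‖^2 := by
    have h1 : (⟪u', u'⟫_ℂ) = ((1 : ℝ) - ‖a‖^2 : ℝ) := by
      simp only [hu', inner_sub_left, inner_sub_right, inner_smul_left, inner_smul_right,
        hvv, huv, huu, ha.symm]
      rw [mul_one, sub_self, mul_zero, sub_zero, RCLike.conj_mul]
      push_cast
      ring_nf
      try rfl
    have h2 := inner_self_eq_norm_sq (𝕜 := ℂ) u'
    rw [h1] at h2
    simpa [← Complex.ofReal_pow] using h2.symm
  have hnw' : ‖w'‖^2 = 1 - ‖b‖^2 := by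
    have h1 : (⟪w', w'⟫_ℂ) = ((1 : ℝ) - ‖b‖^2 : ℝ) := by
      simp only [hw', inner_sub_left, inner_sub_right, inner_smul_left, inner_smul_right,
        hvv, hwv, hww, hb.symm]
      rw [mul_one, sub_self, mul_zero, sub_zero, RCLike.conj_mul]
      push_cast
      ring_nf
      try rfl
    have h2 := inner_self_eq_norm_sq (𝕜 := ℂ) w'
    rw [h1] at h2
    simpa [← Complex.ofReal_pow] using h2.symm
  have hUeq : ‖u'‖ = Real.sqrt (1 - ‖a‖^2) := by
    rw [← hnu', Real.sqrt_sq (norm_nonneg _)]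
  have hWeq : ‖w'‖ = Real.sqrt (1 - ‖b‖^2) := by
    rw [← hnw', Real.sqrt_sq (norm_nonneg _)]
  have hCS : ‖(⟪u', w'⟫_ℂ)‖ ≤ ‖u'‖ * ‖w'‖ := norm_inner_le_norm _ _
  have hsplit : ⟪u, w⟫_ℂ = conj a * b + ⟪u', w'⟫_ℂ := by rw [hdecomp]; ring
  calc ‖a‖ * ‖b‖ - Real.sqrt (1 - ‖a‖^2) * Real.sqrt (1 - ‖b‖^2)
      ≤ ‖conj a * b‖ - ‖(⟪u', w'⟫_ℂ)‖ := by
        rw [norm_mul, RCLike.norm_conj]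
        rw [hUeq, hWeq] at hCS
        linarith
    _ ≤ ‖conj a * b + ⟪u', w'⟫_ℂ‖ := by
        have h4 : ‖conj a * b‖ ≤ ‖conj a * b + ⟪u', w'⟫_ℂ‖ + ‖(⟪u', w'⟫_ℂ)‖ := by
          have h5 := norm_sub_le (conj a * b + ⟪u', w'⟫_ℂ) (⟪u', w'⟫_ℂ)
          simpa using h5
        linarith
    _ = ‖(⟪u, w⟫_ℂ)‖ := by rw [← hsplit]

/-- Phase-insensitive distance D(U₁,U₂) = √(1 − |Tr(U₁U₂†)|²/d²) on d×d matrices. -/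
noncomputable def pDist {d : ℕ} (U₁ U₂ : Matrix (Fin d) (Fin d) ℂ) : ℝ :=
  Real.sqrt (1 - ‖(U₁ * U₂ᴴ).trace‖ ^ 2 / (d : ℝ) ^ 2)

/-- D satisfies the triangle inequality on unitaries. -/
theorem pdist_triangle {d : ℕ} (U₁ U₂ U₃ : Matrix (Fin d) (Fin d) ℂ)
    (h₁ : U₁ ∈ Matrix.unitaryGroup (Fin d) ℂ)
    (h₂ : U₂ ∈ Matrix.unitaryGroup (Fin d) ℂ)
    (h₃ : U₃ ∈ Matrix.unitaryGroup (Fin d) ℂ) :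
    pDist U₁ U₃ ≤ pDist U₁ U₂ + pDist U₂ U₃ := by
  rcases Nat.eq_zero_or_pos d with hd | hd
  · subst hd
    have key : ∀ A B : Matrix (Fin 0) (Fin 0) ℂ, pDist A B = 1 := by
      intro A B
      simp [pDist, Matrix.trace]
    rw [key, key, key]
    norm_num
  · -- setup: normalized vectorizations
    have hdR : (0:ℝ) < (d:ℝ) := by exact_mod_cast hd
    set c : ℂ := ((Real.sqrt (d:ℝ)⁻¹ : ℝ) : ℂ) with hcdef
    have hc : c * c = ((d:ℂ))⁻¹ := by
      rw [hcdef, ← Complex.ofReal_mul, Real.mul_self_sqrt (by positivity)]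
      push_cast
      rfl
    set vec : Matrix (Fin d) (Fin d) ℂ → EuclideanSpace ℂ (Fin d × Fin d) :=
      fun U => WithLp.toLp 2 (fun p : Fin d × Fin d => c * U p.1 p.2) with hvec
    have hinner : ∀ A B : Matrix (Fin d) (Fin d) ℂ,
        ⟪vec A, vec B⟫_ℂ = ((d:ℂ))⁻¹ * (B * Aᴴ).trace := by
      intro A B
      calc ⟪vec A, vec B⟫_ℂ
          = ∑ i : Fin d, ∑ j : Fin d, conj (c * A i j) * (c * B i j) := by
            rw [PiLp.inner_apply, Fintype.sum_prod_type]
            refine Finset.sum_congr rfl fun i _ => Finset.sum_congr rfl fun j _ => ?_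
            simp only [hvec, WithLp.ofLp_toLp, RCLike.inner_apply]
            ring
        _ = ∑ i : Fin d, ∑ j : Fin d, ((d:ℂ))⁻¹ * (B i j * conj (A i j)) := by
            refine Finset.sum_congr rfl fun i _ => Finset.sum_congr rfl fun j _ => ?_
            rw [_root_.map_mul, hcdef, Complex.conj_ofReal, ← hcdef]
            linear_combination (conj (A i j) * B i j) * hc
        _ = ((d:ℂ))⁻¹ * (B * Aᴴ).trace := by
            rw [Matrix.trace, Finset.mul_sum]
            refine Finset.sum_congr rfl fun i _ => ?_
            rw [Matrix.diag_apply, Matrix.mul_apply, Finset.mul_sum]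
            refine Finset.sum_congr rfl fun j _ => ?_
            rw [Matrix.conjTranspose_apply]
            rfl
    have hnorm : ∀ U : Matrix (Fin d) (Fin d) ℂ, U ∈ Matrix.unitaryGroup (Fin d) ℂ →
        ‖vec U‖ = 1 := by
      intro U hU
      have h2 := inner_self_eq_norm_sq (𝕜 := ℂ) (vec U)
      rw [hinner U U] at h2
      have hU1 : U * Uᴴ = 1 := by
        exact (Matrix.mem_unitaryGroup_iff.mp hU)
      rw [hU1, Matrix.trace_one] at h2
      have h3 : ‖vec U‖ ^ 2 = 1 := by
        rw [← h2]
        simp only [Fintype.card_fin]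
        rw [inv_mul_cancel₀ (by exact_mod_cast hd.ne' : (d:ℂ) ≠ 0)]
        simp
      nlinarith [norm_nonneg (vec U)]
    have hn1 := hnorm U₁ h₁
    have hn2 := hnorm U₂ h₂
    have hn3 := hnorm U₃ h₃
    -- norms of inner products in terms of traces
    have hnormval : ∀ A B : Matrix (Fin d) (Fin d) ℂ,
        ‖(⟪vec A, vec B⟫_ℂ)‖ = ‖(B * Aᴴ).trace‖ / (d:ℝ) := by
      intro A B
      rw [hinner, norm_mul, norm_inv]
      simp [div_eq_inv_mul]
    -- flip traces: ‖Tr(B Aᴴ)‖ = ‖Tr(A Bᴴ)‖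
    have hflip : ∀ A B : Matrix (Fin d) (Fin d) ℂ,
        ‖(B * Aᴴ).trace‖ = ‖(A * Bᴴ).trace‖ := by
      intro A B
      have : B * Aᴴ = (A * Bᴴ)ᴴ := by
        rw [Matrix.conjTranspose_mul, Matrix.conjTranspose_conjTranspose]
      rw [this, Matrix.trace_conjTranspose]
      exact norm_star _
    -- the three normalized overlaps
    set a := ‖(⟪vec U₂, vec U₁⟫_ℂ)‖ with hadef
    set b := ‖(⟪vec U₂, vec U₃⟫_ℂ)‖ with hbdef
    set cc := ‖(⟪vec U₁, vec U₃⟫_ℂ)‖ with hccdef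
    have ha0 : 0 ≤ a := norm_nonneg _
    have hb0 : 0 ≤ b := norm_nonneg _
    have hcc0 : 0 ≤ cc := norm_nonneg _
    have ha1 : a ≤ 1 := by
      have := norm_inner_le_norm (𝕜 := ℂ) (vec U₂) (vec U₁)
      rwa [hn1, hn2, one_mul] at this
    have hb1 : b ≤ 1 := by
      have := norm_inner_le_norm (𝕜 := ℂ) (vec U₂) (vec U₃)
      rwa [hn2, hn3, one_mul] at this
    have hkey := pdist_aux_inner (vec U₁) (vec U₂) (vec U₃) hn1 hn2 hn3
    have htri := pdist_aux_real a b cc ha0 ha1 hb0 hb1 hcc0 hkey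
    -- identify the pDist values
    have hea : pDist U₁ U₂ = Real.sqrt (1 - a^2) := by
      rw [pDist, hadef, hnormval, div_pow]
    have heb : pDist U₂ U₃ = Real.sqrt (1 - b^2) := by
      rw [pDist, hbdef, hnormval, hflip U₂ U₃, div_pow]
    have hec : pDist U₁ U₃ = Real.sqrt (1 - cc^2) := by
      rw [pDist, hccdef, hnormval, hflip U₁ U₃, div_pow]
    rw [hea, heb, hec]
    exact htri
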